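/- arXiv:2107.08218 — 3 statements merged into one kernel-verified Lean document; each statement's English description precedes it below -/
import Mathlib

section
/- Let M and A be real numbers with 0 ≤ A and A < M. Let x₁, x₂ ∈ {0,1} and let Z be a real number satisfying Z ≥ 0, Z ≤ (x₁ + x₂)·M, Z ≤ A, and Z ≥ A − (1 − (x₁ + x₂))·M. Then x₁ + x₂ ≤ 1 and Z = (x₁ + x₂)·A. -/
/-- Constraints (27)–(29) of the PDPSET model for a single arc: the
linear constraints on the dummy variable `Z` both recover the product
`(x₁ + x₂) * A` and forbid `x₁ = x₂ = 1` (a two-node subtour). -/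
theorem arc_linearization (M A x₁ x₂ Z : ℝ)
    (hA0 : 0 ≤ A) (hAM : A < M)
    (hx₁ : x₁ = 0 ∨ x₁ = 1) (hx₂ : x₂ = 0 ∨ x₂ = 1)
    (hZ0 : Z ≥ 0) (hZ1 : Z ≤ (x₁ + x₂) * M) (hZ2 : Z ≤ A)
    (hZ3 : Z ≥ A - (1 - (x₁ + x₂)) * M) :
    x₁ + x₂ ≤ 1 ∧ Z = (x₁ + x₂) * A := by
  rcases hx₁ with h1 | h1 <;> rcases hx₂ with h2 | h2 <;> subst h1 <;> subst h2 <;>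
    constructor <;> try linarith
end

section
/- Fix real numbers M > 0, d_max ≥ 0 with d_max < M, binary variables X_ij, X_ji ∈ {0,1}, nonnegative arrival times T_i, T_j with T_i + t_ij + d_max < M and T_j + t_ji + d_max < M, positive travel times t_ij, t_ji > 0, and dwell times U_i, U_j ∈ [0, d_max]. Suppose there exist real numbers Z_ij, Z_ji, S_ij, S_ji with Z_ij, Z_ji ≥ 0 and 0 ≤ S_ij, S_ji ≤ d_max satisfying: Z_ij − Z_ji = 0; Z_ij ≤ (X_ij + X_ji)·M; Z_ij ≤ T_i + t_ij·X_ij + S_ij; Z_ij ≥ T_i + t_ij·X_ij + S_ij − (1 − (X_ij + X_ji))·M; Z_ji ≤ (X_ij + X_ji)·M; Z_ji ≤ T_j + t_ji·X_ji + S_ji; Z_ji ≥ T_j + t_ji·X_ji + S_ji − (1 − (X_ij + X_ji))·M; S_ij ≤ X_ij·M; S_ij ≤ U_i; S_ij ≥ U_i − (1 − X_ij)·M; S_ji ≤ X_ji·M; S_ji ≤ U_j; S_ji ≥ U_j − (1 − X_ji)·M. Then the nonlinear vehicle-time-continuity equation holds: (X_ij + X_ji)·(T_i + t_ij·X_ij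 + X_ij·U_i) = (X_ij + X_ji)·(T_j + t_ji·X_ji + X_ji·U_j). -/
/-- One direction of Proposition 1 (single undirected arc, single
vehicle): the linear system (26)–(35) implies the nonlinear
vehicle-time-continuity equation (25). -/
theorem linear_system_implies_continuity
    (M dmax Xij Xji Ti Tj tij tji Ui Uj Zij Zji Sij Sji : ℝ)
    (hM : 0 < M) (hd0 : 0 ≤ dmax) (hdM : dmax < M)
    (hXij : Xij = 0 ∨ Xij = 1) (hXji : Xji = 0 ∨ Xji = 1)
    (hTi0 : 0 ≤ Ti) (hTj0 : 0 ≤ Tj)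
    (hTiM : Ti + tij + dmax < M) (hTjM : Tj + tji + dmax < M)
    (htij : 0 < tij) (htji : 0 < tji)
    (hUi : 0 ≤ Ui ∧ Ui ≤ dmax) (hUj : 0 ≤ Uj ∧ Uj ≤ dmax)
    (hZij0 : 0 ≤ Zij) (hZji0 : 0 ≤ Zji)
    (hSij0 : 0 ≤ Sij) (hSijd : Sij ≤ dmax)
    (hSji0 : 0 ≤ Sji) (hSjid : Sji ≤ dmax)
    (h26 : Zij - Zji = 0)
    (h27 : Zij ≤ (Xij + Xji) * M)
    (h28 : Zij ≤ Ti + tij * Xij + Sij)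
    (h29 : Zij ≥ Ti + tij * Xij + Sij - (1 - (Xij + Xji)) * M)
    (h30 : Zji ≤ (Xij + Xji) * M)
    (h31 : Zji ≤ Tj + tji * Xji + Sji)
    (h32 : Zji ≥ Tj + tji * Xji + Sji - (1 - (Xij + Xji)) * M)
    (h33 : Sij ≤ Xij * M)
    (h34 : Sij ≤ Ui)
    (h35 : Sij ≥ Ui - (1 - Xij) * M)
    (h33' : Sji ≤ Xji * M)
    (h34' : Sji ≤ Uj)
    (h35' : Sji ≥ Uj - (1 - Xji) * M) :
    (Xij + Xji) * (Ti + tij * Xij + Xij * Ui)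
      = (Xij + Xji) * (Tj + tji * Xji + Xji * Uj) := by
  obtain ⟨hUi0, hUid⟩ := hUi
  obtain ⟨hUj0, hUjd⟩ := hUj
  rcases hXij with h1 | h1 <;> rcases hXji with h2 | h2 <;> subst h1 <;> subst h2 <;>
    ring_nf <;> ring_nf at h26 h27 h28 h29 h30 h31 h32 h33 h35 h33' h35' <;>
    linarith
end

section
/- Fix real numbers M > 0, d_max ≥ 0 with d_max < M, binary variables X_ij, X_ji ∈ {0,1} with X_ij + X_ji ≤ 1, nonnegative arrival times T_i, T_j with T_i + t_ij + d_max < M and T_j + t_ji + d_max < M, positive travel times t_ij, t_ji > 0, and dwell times U_i, U_j ∈ [0, d_max]. If the nonlinear vehicle-time-continuity equation (X_ij + X_ji)·(T_i + t_ij·X_ij + X_ij·U_i) = (X_ij + X_ji)·(T_j + t_ji·X_ji + X_ji·U_j) holds, then there exist real numbers Z_ij, Z_ji, S_ij, S_ji with Z_ij, Z_ji ≥ 0 and 0 ≤ S_ij, S_ji ≤ d_max satisfying: Z_ij − Z_ji = 0; Z_ij ≤ (X_ij + X_ji)·M; Z_ij ≤ T_i + t_ij·X_ij + S_ij; Z_ij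 ≥ T_i + t_ij·X_ij + S_ij − (1 − (X_ij + X_ji))·M; Z_ji ≤ (X_ij + X_ji)·M; Z_ji ≤ T_j + t_ji·X_ji + S_ji; Z_ji ≥ T_j + t_ji·X_ji + S_ji − (1 − (X_ij + X_ji))·M; S_ij ≤ X_ij·M; S_ij ≤ U_i; S_ij ≥ U_i − (1 − X_ij)·M; S_ji ≤ X_ji·M; S_ji ≤ U_j; S_ji ≥ U_j − (1 − X_ji)·M. (Explicitly, taking S_ij = X_ij·U_i, S_ji = X_ji·U_j, Z_ij = (X_ij + X_ji)·(T_i + t_ij·X_ij + S_ij) and Z_ji = (X_ij + X_ji)·(T_j + t_ji·X_ji + S_ji) works.) -/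
/-- Other direction of Proposition 1 (single undirected arc, single
vehicle, feasible case `X_ij + X_ji ≤ 1`): the nonlinear
vehicle-time-continuity equation (25) admits a solution of the
equivalent linear system (26)–(35). -/
theorem continuity_implies_linear_system
    (M dmax Xij Xji Ti Tj tij tji Ui Uj : ℝ)
    (hM : 0 < M) (hd0 : 0 ≤ dmax) (hdM : dmax < M)
    (hXij : Xij = 0 ∨ Xij = 1) (hXji : Xji = 0 ∨ Xji = 1)
    (hsum : Xij + Xji ≤ 1)
    (hTi0 : 0 ≤ Ti) (hTj0 : 0 ≤ Tj)
    (hTiM : Ti + tij + dmax < M) (hTjM : Tj + tji + dmax < M)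
    (htij : 0 < tij) (htji : 0 < tji)
    (hUi : 0 ≤ Ui ∧ Ui ≤ dmax) (hUj : 0 ≤ Uj ∧ Uj ≤ dmax)
    (h25 : (Xij + Xji) * (Ti + tij * Xij + Xij * Ui)
      = (Xij + Xji) * (Tj + tji * Xji + Xji * Uj)) :
    ∃ Zij Zji Sij Sji : ℝ,
      0 ≤ Zij ∧ 0 ≤ Zji ∧
      0 ≤ Sij ∧ Sij ≤ dmax ∧ 0 ≤ Sji ∧ Sji ≤ dmax ∧
      Zij - Zji = 0 ∧
      Zij ≤ (Xij + Xji) * M ∧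
      Zij ≤ Ti + tij * Xij + Sij ∧
      Zij ≥ Ti + tij * Xij + Sij - (1 - (Xij + Xji)) * M ∧
      Zji ≤ (Xij + Xji) * M ∧
      Zji ≤ Tj + tji * Xji + Sji ∧
      Zji ≥ Tj + tji * Xji + Sji - (1 - (Xij + Xji)) * M ∧
      Sij ≤ Xij * M ∧ Sij ≤ Ui ∧ Sij ≥ Ui - (1 - Xij) * M ∧
      Sji ≤ Xji * M ∧ Sji ≤ Uj ∧ Sji ≥ Uj - (1 - Xji) * M := by
  obtain ⟨hUi0, hUid⟩ := hUi
  obtain ⟨hUj0, hUjd⟩ := hUj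
  refine ⟨(Xij + Xji) * (Ti + tij * Xij + Xij * Ui),
    (Xij + Xji) * (Tj + tji * Xji + Xji * Uj),
    Xij * Ui, Xji * Uj, ?_⟩
  rcases hXij with h1 | h1 <;> rcases hXji with h2 | h2 <;>
    subst h1 <;> subst h2 <;>
    norm_num at h25 ⊢ <;>
    (repeat' constructor) <;> linarith
end
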